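/- arXiv:1107.2665 — 3 statements merged into one kernel-verified Lean document; each statement's English description precedes it below -/
import Mathlib

section
/- Let f_M ≥ 0 and f⁰ > 2·f_M be real numbers. Suppose x, y : ℝ → ℂ are continuous, integrable functions whose Fourier transforms vanish at every frequency f' with |f'| > f_M. If x(n/f⁰) = y(n/f⁰) for every integer n, then x = y. (A band-limited signal is uniquely determined by its discrete samples taken at any rate exceeding twice its bandwidth.) -/
open MeasureTheory

open FourierTransform Real Complex intervalIntegral in
/-- Auxiliary: a continuous integrable band-limited function vanishing at all
samples `n / f0` is identically zero. -/
theorem sampling_aux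
    (fM f0 : ℝ) (hfM : 0 ≤ fM) (hf0 : 2 * fM < f0)
    (z : ℝ → ℂ) (hzc : Continuous z) (hzi : Integrable z)
    (hzb : ∀ f' : ℝ, |f'| > fM → FourierTransform.fourier z f' = 0)
    (hsamp : ∀ n : ℤ, z ((n : ℝ) / f0) = 0) : ∀ t, z t = 0 := by
  have hf0pos : 0 < f0 := by linarith
  haveI : Fact (0 < f0) := ⟨hf0pos⟩
  set Z : ℝ → ℂ := 𝓕 z with hZ
  have hZc : Continuous Z :=
    VectorFourier.fourierIntegral_continuous Real.continuous_fourierChar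
      continuous_inner hzi
  have hZ0 : ∀ v : ℝ, v ∉ Set.Icc (-fM) fM → Z v = 0 := by
    intro v hv
    apply hzb
    simp only [Set.mem_Icc, not_and_or, not_le] at hv
    rcases hv with h | h
    · rw [abs_of_neg (by linarith)]; linarith
    · rw [abs_of_pos (by linarith)]; linarith
  have hZsupp : HasCompactSupport Z :=
    HasCompactSupport.intro isCompact_Icc hZ0
  have hZi : Integrable Z := hZc.integrable_of_hasCompactSupport hZsupp
  have hinv : 𝓕⁻ (𝓕 z) = z := hzc.fourierInv_fourier_eq hzi hZi
  obtain ⟨a, ha⟩ : ∃ a : ℝ, a = -(f0 / 2) := ⟨_, rfl⟩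
  have hsub : Set.Icc (-fM) fM ⊆ Set.Ioc a (a + f0) := fun v hv =>
    ⟨by simp only [Set.mem_Icc] at hv; linarith [hv.1], by simp only [Set.mem_Icc] at hv; linarith [hv.2]⟩
  have hZa : Z a = Z (a + f0) := by
    rw [hZ0 a (by simp only [Set.mem_Icc, not_and_or, not_le]; left; linarith),
      hZ0 (a + f0) (by simp only [Set.mem_Icc, not_and_or, not_le]; right; linarith)]
  have hGcont : Continuous (AddCircle.liftIco f0 a Z) :=
    AddCircle.liftIco_continuous hZa hZc.continuousOn
  -- the inverse Fourier transform of `Z` at `w` is an integral over `Ioc a (a + f0)`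
  have hioc : ∀ w : ℝ, 𝓕⁻ Z w = ∫ v in Set.Ioc a (a + f0),
      Complex.exp ((2 * Real.pi * (v * w) : ℝ) * Complex.I) • Z v := by
    intro w
    rw [Real.fourierInv_eq']
    rw [setIntegral_eq_integral_of_forall_compl_eq_zero]
    · congr 1
      funext v
      rw [RCLike.inner_apply, conj_trivial, mul_comm w v]
    · intro v hv
      rw [hZ0 v (fun hv' => hv (hsub hv')), smul_zero]
  -- Fourier coefficients of the lift vanish
  have hcoeff : ∀ n : ℤ, fourierCoeff (AddCircle.liftIco f0 a Z) n = 0 := by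
    intro n
    rw [fourierCoeff_liftIco_eq, fourierCoeffOn_eq_integral]
    have hb : a + f0 - a = f0 := add_sub_cancel_left a f0
    rw [hb]
    have key : (∫ v in a..(a + f0), fourier (-n) (v : AddCircle f0) • Z v)
        = 𝓕⁻ Z ((-n : ℝ) / f0) := by
      rw [hioc, intervalIntegral.integral_of_le (by linarith)]
      refine setIntegral_congr_fun measurableSet_Ioc fun v _ => ?_
      rw [fourier_coe_apply]
      congr 1
      push_cast
      field_simp
    rw [key, hinv]
    have := hsamp (-n)
    push_cast at this ⊢
    rw [this, smul_zero]
  -- the periodic lift of `Z` has all Fourier coefficients zero, hence vanishes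
  have hG0 : (⟨AddCircle.liftIco f0 a Z, hGcont⟩ : C(AddCircle f0, ℂ)) = 0 := by
    set G : C(AddCircle f0, ℂ) := ⟨AddCircle.liftIco f0 a Z, hGcont⟩ with hGdef
    have hcoeff' : ∀ n : ℤ, fourierCoeff (G : AddCircle f0 → ℂ) n = 0 := hcoeff
    have hs : Summable (fun i => fourierCoeff (G : AddCircle f0 → ℂ) i) := by
      simp only [hcoeff']; exact summable_zero
    have hsum := hasSum_fourier_series_of_summable hs
    simp only [hcoeff', zero_smul] at hsum
    exact hsum.unique hasSum_zero
  have hZzero : ∀ v, Z v = 0 := by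
    intro v
    by_cases hv : v ∈ Set.Icc (-fM) fM
    · have hv' : v ∈ Set.Ico a (a + f0) := by
        simp only [Set.mem_Icc] at hv
        exact ⟨by linarith [hv.1], by linarith [hv.2]⟩
      calc Z v = AddCircle.liftIco f0 a Z (v : AddCircle f0) :=
            (AddCircle.liftIco_coe_apply hv').symm
        _ = (⟨AddCircle.liftIco f0 a Z, hGcont⟩ : C(AddCircle f0, ℂ)) (v : AddCircle f0) := rfl
        _ = 0 := by rw [hG0]; rfl
    · exact hZ0 v hv
  intro t
  have h1 : z t = 𝓕⁻ Z t := (congrFun hinv t).symm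
  rw [h1, funext hZzero]
  simp [Real.fourierInv_eq]

/-- A band-limited signal is uniquely determined by its discrete samples taken
at any rate exceeding twice its bandwidth (Nyquist–Shannon sampling theorem). -/
theorem sampling_theorem
    (fM f0 : ℝ) (hfM : 0 ≤ fM) (hf0 : 2 * fM < f0)
    (x y : ℝ → ℂ)
    (hxc : Continuous x) (hyc : Continuous y)
    (hxi : Integrable x) (hyi : Integrable y)
    (hxb : ∀ f' : ℝ, |f'| > fM → FourierTransform.fourier x f' = 0)
    (hyb : ∀ f' : ℝ, |f'| > fM → FourierTransform.fourier y f' = 0)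
    (hsamp : ∀ n : ℤ, x ((n : ℝ) / f0) = y ((n : ℝ) / f0)) :
    x = y := by
  have hFsub : ∀ f' : ℝ, FourierTransform.fourier (fun t => x t - y t) f' =
      FourierTransform.fourier x f' - FourierTransform.fourier y f' := by
    intro f'
    simp only [Real.fourier_real_eq, smul_sub]
    exact integral_sub ((Real.fourierIntegral_convergent_iff' (ContinuousLinearMap.mul ℝ ℝ) f').2 hxi)
      ((Real.fourierIntegral_convergent_iff' (ContinuousLinearMap.mul ℝ ℝ) f').2 hyi)
  have key := sampling_aux fM f0 hfM hf0 (fun t => x t - y t)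
    (hxc.sub hyc) (hxi.sub hyi)
    (fun f' hf' => by rw [hFsub f', hxb f' hf', hyb f' hf', sub_zero])
    (fun n => by rw [hsamp n, sub_self])
  funext t
  exact sub_eq_zero.mp (key t)
end

section
/- Let t_M > 0 and let Δf be a real number with 0 < Δf < 1/(2·t_M). Suppose x, y : ℝ → ℂ are integrable functions that vanish at every time t' with |t'| > t_M. If 𝓕x(n·Δf) = 𝓕y(n·Δf) for every integer n, then 𝓕x(f) = 𝓕y(f) for every real f (equivalently, x = y almost everywhere). (The Fourier transform of a compactly supported signal is uniquely determined by its values on the discrete frequency grid n·Δf provided Δf < 1/(2·t_M).) -/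
open MeasureTheory

/-- The Fourier transform of a compactly supported signal is uniquely determined
by its values on the discrete frequency grid `n·Δf`, provided `Δf < 1/(2·t_M)`. -/
theorem fourier_determined_by_discrete_frequencies
    (tM Δf : ℝ) (htM : 0 < tM) (hΔf : 0 < Δf) (hΔf' : Δf < 1 / (2 * tM))
    (x y : ℝ → ℂ)
    (hxi : Integrable x) (hyi : Integrable y)
    (hx : ∀ t' : ℝ, |t'| > tM → x t' = 0)
    (hy : ∀ t' : ℝ, |t'| > tM → y t' = 0)
    (hgrid : ∀ n : ℤ,
      FourierTransform.fourier x ((n : ℝ) * Δf) = FourierTransform.fourier y ((n : ℝ) * Δf)) :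
    ∀ f : ℝ, FourierTransform.fourier x f = FourierTransform.fourier y f := by
  intro f
  set T : ℝ := 1 / Δf with hTdef
  have hT : 0 < T := by positivity
  have h2tM : 2 * tM < T := by
    rw [hTdef]
    rw [lt_div_iff₀ hΔf]
    have := (lt_div_iff₀ (by positivity : (0:ℝ) < 2 * tM)).mp hΔf'
    linarith [mul_comm Δf (2 * tM) ▸ this]
  haveI : Fact (0 < T) := ⟨hT⟩
  set z : ℝ → ℂ := fun t => x t - y t with hzdef
  have hzi : Integrable z := hxi.sub hyi
  have hz0 : ∀ t : ℝ, tM < |t| → z t = 0 := fun t ht => by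
    simp [hzdef, hx t ht, hy t ht]
  have hce : ∀ w : ℝ, AEStronglyMeasurable
      (fun t : ℝ => Complex.exp (↑(-2 * Real.pi * t * w) * Complex.I)) volume := by
    intro w
    exact (Complex.continuous_exp.comp (by fun_prop)).aestronglyMeasurable
  -- integrability of z against any bounded continuous test function of the circle
  have hint : ∀ G : C(AddCircle T, ℂ), Integrable (fun t : ℝ => G (t : AddCircle T) * z t) :=
    fun G => hzi.bdd_mul
      ((map_continuous G).comp (AddCircle.continuous_mk' T)).aestronglyMeasurable
      (c := ‖G‖) (Filter.Eventually.of_forall fun t => G.norm_coe_le_norm _)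
  -- the continuous linear functional G ↦ ∫ G ∘ coe · z
  let L₀ : C(AddCircle T, ℂ) →ₗ[ℂ] ℂ :=
    { toFun := fun G => ∫ t : ℝ, G (t : AddCircle T) * z t
      map_add' := fun G H => by
        simp only [ContinuousMap.add_apply, add_mul]
        exact integral_add (hint G) (hint H)
      map_smul' := fun c G => by
        simp only [ContinuousMap.smul_apply, smul_eq_mul, mul_assoc, RingHom.id_apply]
        exact integral_const_mul c _ }
  have hLbound : ∀ G : C(AddCircle T, ℂ), ‖L₀ G‖ ≤ (∫ t : ℝ, ‖z t‖) * ‖G‖ := by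
    intro G
    calc ‖∫ t : ℝ, G (t : AddCircle T) * z t‖ ≤ ∫ t : ℝ, ‖G (t : AddCircle T) * z t‖ :=
          norm_integral_le_integral_norm _
      _ ≤ ∫ t : ℝ, ‖G‖ * ‖z t‖ := by
          refine integral_mono (hint G).norm (hzi.norm.const_mul _) fun t => ?_
          rw [norm_mul]
          exact mul_le_mul_of_nonneg_right (G.norm_coe_le_norm _) (norm_nonneg _)
      _ = (∫ t : ℝ, ‖z t‖) * ‖G‖ := by rw [integral_const_mul, mul_comm]
  let L : C(AddCircle T, ℂ) →L[ℂ] ℂ := LinearMap.mkContinuous L₀ (∫ t : ℝ, ‖z t‖) hLbound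
  -- L vanishes on the fourier monomials
  have hchar : ∀ n : ℤ, L (fourier n) = 0 := by
    intro n
    have hgz : ∫ t : ℝ, Complex.exp (↑(-2 * Real.pi * t * (((-n : ℤ) : ℝ) * Δf)) * Complex.I) • z t
        = 0 := by
      have h1 := hgrid (-n)
      rw [Real.fourier_real_eq_integral_exp_smul,
        Real.fourier_real_eq_integral_exp_smul] at h1
      have hix : Integrable (fun t : ℝ =>
          Complex.exp (↑(-2 * Real.pi * t * (((-n : ℤ) : ℝ) * Δf)) * Complex.I) • x t) :=
        hxi.bdd_mul (hce _) (c := 1) (Filter.Eventually.of_forall fun t => le_of_eq (Complex.norm_exp_ofReal_mul_I _))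
      have hiy : Integrable (fun t : ℝ =>
          Complex.exp (↑(-2 * Real.pi * t * (((-n : ℤ) : ℝ) * Δf)) * Complex.I) • y t) :=
        hyi.bdd_mul (hce _) (c := 1) (Filter.Eventually.of_forall fun t => le_of_eq (Complex.norm_exp_ofReal_mul_I _))
      have h2 : (fun t : ℝ =>
          Complex.exp (↑(-2 * Real.pi * t * (((-n : ℤ) : ℝ) * Δf)) * Complex.I) • z t)
          = fun t : ℝ =>
          Complex.exp (↑(-2 * Real.pi * t * (((-n : ℤ) : ℝ) * Δf)) * Complex.I) • x t -
          Complex.exp (↑(-2 * Real.pi * t * (((-n : ℤ) : ℝ) * Δf)) * Complex.I) • y t := by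
        funext t; simp only [hzdef, smul_eq_mul]; ring
      rw [h2, integral_sub hix hiy, sub_eq_zero]
      exact h1
    rw [show L (fourier n) = ∫ t : ℝ, fourier n (t : AddCircle T) * z t from rfl, ← hgz]
    refine integral_congr_ae (Filter.Eventually.of_forall fun t => ?_)
    show fourier n (t : AddCircle T) * z t
        = Complex.exp (↑(-2 * Real.pi * t * (((-n : ℤ) : ℝ) * Δf)) * Complex.I) • z t
    rw [fourier_coe_apply, smul_eq_mul]
    congr 1
    have hΔfC : (Δf : ℂ) ≠ 0 := Complex.ofReal_ne_zero.mpr hΔf.ne'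
    have hTC : (T : ℂ) = 1 / (Δf : ℂ) := by rw [hTdef]; push_cast; ring
    rw [hTC]
    push_cast
    field_simp
  -- hence L vanishes identically, by density of the span of the monomials
  have hLzero : ∀ G : C(AddCircle T, ℂ), L G = 0 := by
    intro G
    have hsub : (Submodule.span ℂ (Set.range (@fourier T)) : Set C(AddCircle T, ℂ)) ⊆
        L ⁻¹' {0} := by
      intro P hP
      have : P ∈ LinearMap.ker (L : C(AddCircle T, ℂ) →ₗ[ℂ] ℂ) := by
        refine Submodule.span_le.mpr ?_ hP
        rintro - ⟨n, rfl⟩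
        exact LinearMap.mem_ker.mpr (hchar n)
      simpa using this
    have hG : G ∈ closure (Submodule.span ℂ (Set.range (@fourier T)) : Set C(AddCircle T, ℂ)) := by
      rw [← Submodule.topologicalClosure_coe, span_fourier_closure_eq_top]
      trivial
    have := closure_minimal hsub (IsClosed.preimage L.continuous isClosed_singleton) hG
    simpa using this
  -- construct a continuous function on the circle agreeing with the character exp(-2πi f t)
  -- on [-tM, tM]
  set c : ℝ := T / 2 with hcdef
  have htMc : tM < c := by rw [hcdef]; linarith
  set σ : ℝ → ℝ := fun t => t * max 0 (min 1 ((c - |t|) / (c - tM))) with hσdef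
  have hσcont : Continuous σ := by
    apply continuous_id.mul
    exact continuous_const.max (continuous_const.min
      ((continuous_const.sub continuous_abs).div_const _))
  have hσ_eq : ∀ t : ℝ, |t| ≤ tM → σ t = t := by
    intro t ht
    have h1 : (1 : ℝ) ≤ (c - |t|) / (c - tM) := by
      rw [le_div_iff₀ (by linarith)]
      linarith
    simp [hσdef, min_eq_left h1, max_eq_right (zero_le_one' ℝ)]
  have hσc : σ c = 0 ∧ σ (-c) = 0 := by
    have hc0 : 0 < c := by linarith
    constructor <;>
    · simp only [hσdef, abs_neg, abs_of_pos hc0, sub_self, zero_div]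
      simp
  set g0 : ℝ → ℂ := fun t => Complex.exp (↑(-2 * Real.pi * σ t * f) * Complex.I) with hg0def
  have hg0cont : Continuous g0 := by fun_prop
  have hends : g0 (-c) = g0 (-c + T) := by
    have : -c + T = c := by rw [hcdef]; ring
    rw [this, hg0def]
    simp [hσc.1, hσc.2]
  set G : C(AddCircle T, ℂ) :=
    ⟨AddCircle.liftIco T (-c) g0,
      AddCircle.liftIco_continuous hends hg0cont.continuousOn⟩ with hGdef
  have hGt : ∀ t : ℝ, |t| ≤ tM →
      G (t : AddCircle T) = Complex.exp (↑(-2 * Real.pi * t * f) * Complex.I) := by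
    intro t ht
    have hmem : t ∈ Set.Ico (-c) (-c + T) := by
      rw [abs_le] at ht
      constructor
      · linarith
      · have : -c + T = c := by rw [hcdef]; ring
        rw [this]; linarith
    have h5 := AddCircle.liftIco_coe_apply (f := g0) hmem
    rw [hGdef]
    simp only [ContinuousMap.coe_mk]
    rw [h5]
    show Complex.exp (↑(-2 * Real.pi * σ t * f) * Complex.I) = _
    rw [hσ_eq t ht]
  -- conclude
  have hkey : (∫ t : ℝ, G (t : AddCircle T) * z t) = 0 := hLzero G
  rw [Real.fourier_real_eq_integral_exp_smul, Real.fourier_real_eq_integral_exp_smul]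
  have hix : Integrable (fun t : ℝ => Complex.exp (↑(-2 * Real.pi * t * f) * Complex.I) • x t) :=
    hxi.bdd_mul (hce f) (c := 1) (Filter.Eventually.of_forall fun t => le_of_eq (Complex.norm_exp_ofReal_mul_I _))
  have hiy : Integrable (fun t : ℝ => Complex.exp (↑(-2 * Real.pi * t * f) * Complex.I) • y t) :=
    hyi.bdd_mul (hce f) (c := 1) (Filter.Eventually.of_forall fun t => le_of_eq (Complex.norm_exp_ofReal_mul_I _))
  rw [← sub_eq_zero, ← integral_sub hix hiy]
  rw [← hkey]
  refine integral_congr_ae (Filter.Eventually.of_forall fun t => ?_)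
  show Complex.exp (↑(-2 * Real.pi * t * f) * Complex.I) • x t -
      Complex.exp (↑(-2 * Real.pi * t * f) * Complex.I) • y t = G (t : AddCircle T) * z t
  rcases le_or_gt |t| tM with ht | ht
  · rw [hGt t ht]
    simp only [smul_eq_mul, hzdef]
    ring
  · have hxt : x t = 0 := hx t ht
    have hyt : y t = 0 := hy t ht
    simp [hzdef, hxt, hyt]
end

section
/- Fix a real number f⁰ > 0 (the sample rate) and a natural number L ≥ 1 (the latency in samples). For natural numbers M ≥ 1 (templates) and N ≥ 2 (template length), define the overlap-save frequency-domain filtering cost with FFT block size D = N + L as C(M, N) := f⁰ · (2·(M+1)·log₂(N+L) + 2·M) / (1 − N/(N+L)), and define the approximation A(M, N) := (1 + N/L) · (2·f⁰·M·log₂ N). Then C(M, N)/A(M, N) → 1 as M → ∞ and N → ∞ (i.e., the limit along the product filter atTop ×ˢ atTop on ℕ × ℕ is 1). (In the limit of many templates and long templates, the computational cost of low-latency frequency-domain convolution scales as (1 + template length/latency)·(2·f⁰·M·log₂ N), growing rapidly as the latency decreases.) -/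
open Filter

/-- In the limit of many templates and long templates, the computational cost of
low-latency overlap-save frequency-domain convolution (with FFT block size
`D = N + L`, giving a latency of `L` samples) scales as
`(1 + template length/latency)·(2·f⁰·M·log₂ N)`. -/
theorem overlap_save_low_latency_cost_asymptotics
    (f0 : ℝ) (hf0 : 0 < f0) (L : ℕ) (hL : 1 ≤ L) :
    Tendsto
      (fun p : ℕ × ℕ =>
        (f0 * (2 * ((p.1 : ℝ) + 1) * Real.logb 2 ((p.2 : ℝ) + (L : ℝ)) + 2 * (p.1 : ℝ)) /
            (1 - (p.2 : ℝ) / ((p.2 : ℝ) + (L : ℝ)))) /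
          ((1 + (p.2 : ℝ) / (L : ℝ)) * (2 * f0 * (p.1 : ℝ) * Real.logb 2 (p.2 : ℝ))))
      (atTop ×ˢ atTop) (nhds 1) := by
  have hL0 : (0:ℝ) < L := by exact_mod_cast hL
  -- auxiliary limits
  have hMlim : Tendsto (fun p : ℕ × ℕ => 1 + 1/(p.1:ℝ)) (atTop ×ˢ atTop) (nhds 1) := by
    have h : Tendsto (fun n : ℕ => 1 / (n:ℝ)) atTop (nhds 0) := tendsto_one_div_atTop_nhds_zero_nat
    simpa using tendsto_const_nhds.add (h.comp tendsto_fst)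
  have hlogN : Tendsto (fun p : ℕ × ℕ => Real.logb 2 (p.2:ℝ)) (atTop ×ˢ atTop) atTop :=
    ((Real.tendsto_logb_atTop one_lt_two).comp tendsto_natCast_atTop_atTop).comp tendsto_snd
  have hinv : Tendsto (fun p : ℕ × ℕ => 1 / Real.logb 2 (p.2:ℝ)) (atTop ×ˢ atTop) (nhds 0) := by
    simpa [one_div, Pi.inv_def] using hlogN.inv_tendsto_atTop
  have hratio : Tendsto (fun p : ℕ × ℕ => Real.logb 2 (((p.2:ℝ) + L) / (p.2:ℝ)))
      (atTop ×ˢ atTop) (nhds 0) := by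
    have harg : Tendsto (fun p : ℕ × ℕ => ((p.2:ℝ) + L) / (p.2:ℝ)) (atTop ×ˢ atTop) (nhds 1) := by
      have h1 : Tendsto (fun n : ℕ => 1 + (L:ℝ) / n) atTop (nhds 1) := by
        simpa using tendsto_const_nhds.add (tendsto_const_div_atTop_nhds_zero_nat (L:ℝ))
      have h2 : Tendsto (fun n : ℕ => ((n:ℝ) + L) / n) atTop (nhds 1) := by
        refine h1.congr' ?_
        filter_upwards [eventually_ge_atTop 1] with n hn
        have hn0 : (n:ℝ) ≠ 0 := by positivity
        field_simp
      exact h2.comp tendsto_snd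
    have hc : ContinuousAt (Real.logb 2) 1 := by
      unfold Real.logb
      exact (Real.continuousAt_log one_ne_zero).div_const _
    simpa [Real.logb_one, Function.comp_def] using hc.tendsto.comp harg
  -- the simplified form tends to 1
  have hglim : Tendsto (fun p : ℕ × ℕ =>
      (1 + 1/(p.1:ℝ)) * (1 + Real.logb 2 (((p.2:ℝ) + L) / (p.2:ℝ)) * (1 / Real.logb 2 (p.2:ℝ)))
        + 1 / Real.logb 2 (p.2:ℝ)) (atTop ×ˢ atTop) (nhds 1) := by
    have := (hMlim.mul ((tendsto_const_nhds (x := (1:ℝ))).add (hratio.mul hinv))).add hinv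
    simpa using this
  refine hglim.congr' ?_
  filter_upwards [(tendsto_fst.eventually (eventually_ge_atTop 1)),
    (tendsto_snd.eventually (eventually_ge_atTop 2))] with p hM hN
  have hM0 : (0:ℝ) < (p.1:ℝ) := by exact_mod_cast Nat.lt_of_lt_of_le Nat.zero_lt_one hM
  have hN2 : (2:ℝ) ≤ (p.2:ℝ) := by exact_mod_cast hN
  set M := (p.1 : ℝ) with hMdef
  set N := (p.2 : ℝ) with hNdef
  have hN0 : (0:ℝ) < N := by linarith
  have hNL : (0:ℝ) < N + L := by linarith
  have hlogN0 : Real.logb 2 N ≠ 0 := (Real.logb_pos one_lt_two (by linarith)).ne'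
  have hsub : Real.logb 2 ((N + L) / N) = Real.logb 2 (N + L) - Real.logb 2 N :=
    Real.logb_div (by linarith) (by linarith)
  have hden : 1 - N / (N + L) = (L:ℝ) / (N + L) := by
    field_simp
    ring
  rw [hden, hsub]
  field_simp
  ring
end
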